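/- Let n, N ≥ 1 and let α : Fin N → ℤⁿ be weights which generate ℤⁿ as an additive group, with the zero vector of ℝⁿ in the intrinsic (relative) interior of the convex hull of {α₁, …, α_N} in ℝⁿ. Define ρ : ℂᴺ → ℝⁿ by ρ_j(z) = Σ_{i=1}^{N} α_i(j)·|z_i|², and let Z = ρ^{-1}(0). Then the set of points z ∈ Z at which the real Fréchet derivative of ρ (as a map of real vector spaces ℂᴺ ≅ ℝ^{2N} → ℝⁿ) is surjective is open and dense in Z (with its subspace topology). -/

import Mathlib

/-- The moment map `ρ : ℂᴺ → ℝⁿ`, `ρ_j(z) = Σ_i α_i(j)·|z_i|²`, of a unitary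
torus action on `ℂᴺ` with weights `α`. -/
noncomputable def torusRealMomentMap (n N : ℕ) (α : Fin N → (Fin n → ℤ))
    (z : Fin N → ℂ) : Fin n → ℝ :=
  fun j => ∑ i, (α i j : ℝ) * ‖z i‖ ^ 2

open ContinuousLinearMap in
/-- The derivative of the moment map. -/
noncomputable def knD (n N : ℕ) (α : Fin N → (Fin n → ℤ)) (z : Fin N → ℂ) :
    (Fin N → ℂ) →L[ℝ] (Fin n → ℝ) :=
  (ContinuousLinearMap.pi fun j => ∑ i, (α i j : ℝ) • ContinuousLinearMap.proj (R := ℝ) i).comp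
    (ContinuousLinearMap.pi fun i =>
      (2 * (z i).re) • (Complex.reCLM.comp (ContinuousLinearMap.proj i)) +
      (2 * (z i).im) • (Complex.imCLM.comp (ContinuousLinearMap.proj i)))

lemma norm_sq_complex (w : ℂ) : ‖w‖ ^ 2 = w.re * w.re + w.im * w.im := by
  rw [Complex.sq_norm, Complex.normSq_apply]

lemma hasFDerivAt_rho (n N : ℕ) (α : Fin N → (Fin n → ℤ)) (z : Fin N → ℂ) :
    HasFDerivAt (torusRealMomentMap n N α) (knD n N α z) z := by
  have hq : HasFDerivAt (fun w : Fin N → ℂ => fun i => ‖w i‖ ^ 2)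
      (ContinuousLinearMap.pi fun i =>
        (2 * (z i).re) • (Complex.reCLM.comp (ContinuousLinearMap.proj i)) +
        (2 * (z i).im) • (Complex.imCLM.comp (ContinuousLinearMap.proj i))) z := by
    refine hasFDerivAt_pi.2 fun i => ?_
    have h1 : HasFDerivAt (fun w : Fin N → ℂ => (w i).re)
        (Complex.reCLM.comp (ContinuousLinearMap.proj i)) z :=
      by
      have := (Complex.reCLM.comp
        (ContinuousLinearMap.proj i : (Fin N → ℂ) →L[ℝ] ℂ)).hasFDerivAt (x := z)
      exact this
    have h2 : HasFDerivAt (fun w : Fin N → ℂ => (w i).im)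
        (Complex.imCLM.comp (ContinuousLinearMap.proj i)) z := by
      have := (Complex.imCLM.comp
        (ContinuousLinearMap.proj i : (Fin N → ℂ) →L[ℝ] ℂ)).hasFDerivAt (x := z)
      exact this
    have hfun : (fun w : Fin N → ℂ => ‖w i‖ ^ 2)
        = fun w => (w i).re * (w i).re + (w i).im * (w i).im :=
      funext fun w => norm_sq_complex _
    rw [hfun]
    convert ((h1.mul h1).add (h2.mul h2)) using 1
    · rfl
    ext v
    simp only [ContinuousLinearMap.add_apply, ContinuousLinearMap.smul_apply,
      ContinuousLinearMap.comp_apply, ContinuousLinearMap.proj_apply,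
      Complex.reCLM_apply, Complex.imCLM_apply, smul_eq_mul]
    ring
  have hL : HasFDerivAt (fun t : Fin N → ℝ => fun j => ∑ i, (α i j : ℝ) * t i)
      (ContinuousLinearMap.pi fun j => ∑ i, (α i j : ℝ) • ContinuousLinearMap.proj (R := ℝ) (φ := fun _ : Fin N => ℝ) i)
      (fun i => ‖z i‖ ^ 2) := by
    have : (fun t : Fin N → ℝ => fun j => ∑ i, (α i j : ℝ) * t i)
        = fun t => (ContinuousLinearMap.pi fun j =>
            ∑ i, (α i j : ℝ) • ContinuousLinearMap.proj (R := ℝ) (φ := fun _ : Fin N => ℝ) i) t := by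
      funext t j
      simp [ContinuousLinearMap.pi_apply, ContinuousLinearMap.sum_apply]
    rw [this]
    exact ContinuousLinearMap.hasFDerivAt _
  exact hL.comp z hq

lemma knD_apply (n N : ℕ) (α : Fin N → (Fin n → ℤ)) (z v : Fin N → ℂ) :
    knD n N α z v
      = ∑ i, (2 * (z i).re * (v i).re + 2 * (z i).im * (v i).im)
          • (fun j => (α i j : ℝ)) := by
  funext j
  simp only [knD, ContinuousLinearMap.comp_apply, ContinuousLinearMap.pi_apply,
    ContinuousLinearMap.sum_apply, ContinuousLinearMap.smul_apply,
    ContinuousLinearMap.add_apply, ContinuousLinearMap.proj_apply,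
    Complex.reCLM_apply, Complex.imCLM_apply, smul_eq_mul, Finset.sum_apply,
    Pi.smul_apply]
  exact Finset.sum_congr rfl fun i _ => by ring

/-- Membership of values in the span of the weights over the support. -/
lemma knD_mem_span (n N : ℕ) (α : Fin N → (Fin n → ℤ)) (z v : Fin N → ℂ) :
    knD n N α z v ∈ Submodule.span ℝ
      ((fun i => (fun j => (α i j : ℝ))) '' {i | z i ≠ 0}) := by
  rw [knD_apply]
  refine Submodule.sum_mem _ fun i _ => ?_
  by_cases hz : z i = 0
  · simp [hz]
  · exact Submodule.smul_mem _ _ (Submodule.subset_span ⟨i, hz, rfl⟩)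

lemma weight_mem_range (n N : ℕ) (α : Fin N → (Fin n → ℤ)) (z : Fin N → ℂ)
    {i : Fin N} (hz : z i ≠ 0) :
    (fun j => (α i j : ℝ)) ∈ Set.range (knD n N α z) := by
  refine ⟨(2 * ‖z i‖ ^ 2)⁻¹ • (Pi.single i (z i) : Fin N → ℂ), ?_⟩
  have hpos : (0:ℝ) < 2 * ‖z i‖ ^ 2 := by
    have := norm_pos_iff.mpr hz
    positivity
  rw [map_smul, knD_apply]
  have : (∑ k, (2 * (z k).re * ((Pi.single i (z i) : Fin N → ℂ) k).re
        + 2 * (z k).im * ((Pi.single i (z i) : Fin N → ℂ) k).im) • (fun j => (α k j : ℝ)))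
      = (2 * ‖z i‖ ^ 2) • (fun j => (α i j : ℝ)) := by
    rw [Finset.sum_eq_single i]
    · simp only [Pi.single_eq_same, norm_sq_complex]
      ring_nf
    · intro k _ hk
      have : (Pi.single i (z i) : Fin N → ℂ) k = 0 := Pi.single_eq_of_ne hk _
      simp [this]
    · simp
  rw [this, smul_smul, inv_mul_cancel₀ (ne_of_gt hpos), one_smul]

lemma knD_surjective_iff (n N : ℕ) (α : Fin N → (Fin n → ℤ)) (z : Fin N → ℂ) :
    Function.Surjective (knD n N α z) ↔
      Submodule.span ℝ ((fun i => (fun j => (α i j : ℝ))) '' {i | z i ≠ 0}) = ⊤ := by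
  constructor
  · intro h
    rw [eq_top_iff]
    rintro x -
    obtain ⟨v, rfl⟩ := h x
    exact knD_mem_span n N α z v
  · intro h x
    have hx : x ∈ Submodule.span ℝ ((fun i => (fun j => (α i j : ℝ))) '' {i | z i ≠ 0}) := by
      rw [h]; trivial
    have hle : Submodule.span ℝ ((fun i => (fun j => (α i j : ℝ))) '' {i | z i ≠ 0})
        ≤ LinearMap.range ((knD n N α z : (Fin N → ℂ) →ₗ[ℝ] (Fin n → ℝ))) := by
      rw [Submodule.span_le]
      rintro _ ⟨i, hi, rfl⟩
      exact weight_mem_range n N α z hi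
    exact hle hx

lemma isOpen_span_support_top (n N : ℕ) (α : Fin N → (Fin n → ℤ)) :
    IsOpen {z : Fin N → ℂ |
      Submodule.span ℝ ((fun i => (fun j => (α i j : ℝ))) '' {i | z i ≠ 0}) = ⊤} := by
  rw [isOpen_iff_mem_nhds]
  intro z hz
  have hopen : IsOpen {w : Fin N → ℂ | ∀ i, z i ≠ 0 → w i ≠ 0} := by
    have : {w : Fin N → ℂ | ∀ i, z i ≠ 0 → w i ≠ 0}
        = ⋂ i, {w : Fin N → ℂ | z i ≠ 0 → w i ≠ 0} := by
      ext w; simp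
    rw [this]
    refine isOpen_iInter_of_finite fun i => ?_
    by_cases h : z i = 0
    · simp [h]
    · have : {w : Fin N → ℂ | z i ≠ 0 → w i ≠ 0}
          = (fun w : Fin N → ℂ => w i) ⁻¹' {0}ᶜ := by
        ext w; simp [h]
      rw [this]
      exact (isOpen_compl_singleton).preimage (continuous_apply i)
  refine Filter.mem_of_superset (hopen.mem_nhds fun i hi => hi) ?_
  intro w hw
  have hsub : {i | z i ≠ 0} ⊆ {i | w i ≠ 0} := fun i hi => hw i hi
  rw [Set.mem_setOf_eq, eq_top_iff]
  rw [Set.mem_setOf_eq] at hz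
  rw [← hz]
  exact Submodule.span_mono (Set.image_mono hsub)

open Set in
lemma exists_pos_combo (n N : ℕ) (α : Fin N → (Fin n → ℤ))
    (hstable : (0 : EuclideanSpace ℝ (Fin n)) ∈
      intrinsicInterior ℝ (convexHull ℝ
        (Set.range fun i => (WithLp.toLp 2 (fun j => (α i j : ℝ)) : EuclideanSpace ℝ (Fin n))))) :
    ∃ c : Fin N → ℝ, (∀ i, 0 < c i) ∧
      ∀ j, ∑ i, c i * (α i j : ℝ) = 0 := by
  classical
  set β : Fin N → EuclideanSpace ℝ (Fin n) :=
    fun i => (WithLp.toLp 2 (fun j => (α i j : ℝ)) : EuclideanSpace ℝ (Fin n)) with hβ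
  set s : Set (EuclideanSpace ℝ (Fin n)) := convexHull ℝ (Set.range β) with hs
  have h0s : (0 : EuclideanSpace ℝ (Fin n)) ∈ s := intrinsicInterior_subset hstable
  have h0A : (0 : EuclideanSpace ℝ (Fin n)) ∈ affineSpan ℝ s := subset_affineSpan ℝ s h0s
  set vstar : EuclideanSpace ℝ (Fin n) := -∑ i, β i with hvstar
  have hv : vstar ∈ vectorSpan ℝ s := by
    refine Submodule.neg_mem _ (Submodule.sum_mem _ fun i _ => ?_)
    have : β i -ᵥ (0 : EuclideanSpace ℝ (Fin n)) ∈ vectorSpan ℝ s :=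
      vsub_mem_vectorSpan ℝ (subset_convexHull ℝ _ ⟨i, rfl⟩) h0s
    simpa using this
  have hmem : ∀ ε : ℝ, ε • vstar ∈ affineSpan ℝ s := by
    intro ε
    have hd : ε • vstar ∈ (affineSpan ℝ s).direction := by
      rw [direction_affineSpan]
      exact Submodule.smul_mem _ _ hv
    have := AffineSubspace.vadd_mem_of_mem_direction hd h0A
    simpa using this
  -- find a positive ε with ε • vstar ∈ s
  obtain ⟨y, hy, hy0⟩ := mem_intrinsicInterior.1 hstable
  set f : ℝ → affineSpan ℝ s := fun ε => ⟨ε • vstar, hmem ε⟩ with hf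
  have hfc : Continuous f := (continuous_id.smul continuous_const).subtype_mk _
  have hf0 : f 0 = y := Subtype.ext (by simp [hf, hy0])
  have hnhds : f ⁻¹' interior ((↑) ⁻¹' s : Set (affineSpan ℝ s)) ∈ nhds (0:ℝ) := by
    refine hfc.continuousAt.preimage_mem_nhds (isOpen_interior.mem_nhds ?_)
    rw [hf0]; exact hy
  obtain ⟨ε, hε⟩ := Filter.nonempty_of_mem
    (Filter.inter_mem (mem_nhdsWithin_of_mem_nhds hnhds)
      (self_mem_nhdsWithin (s := Set.Ioi (0:ℝ))))
  have hεpos : 0 < ε := hε.2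
  have hεs : ε • vstar ∈ s := by
    have : f ε ∈ (Subtype.val ⁻¹' s : Set (affineSpan ℝ s)) := interior_subset hε.1
    exact this
  -- extract a convex combination
  rw [hs, convexHull_range_eq_exists_affineCombination] at hεs
  obtain ⟨t, w, hw0, hw1, hcomb⟩ := hεs
  rw [Finset.affineCombination_eq_linear_combination t β w hw1] at hcomb
  refine ⟨fun i => (if i ∈ t then w i else 0) + ε, fun i => ?_, ?_⟩
  · have : (0:ℝ) ≤ if i ∈ t then w i else 0 := by
      by_cases h : i ∈ t
      · simpa [h] using hw0 i h
      · simp [h]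
    dsimp only
    linarith
  · intro j
    have hvec : ∑ i, ((if i ∈ t then w i else 0) + ε) • β i = (0 : EuclideanSpace ℝ (Fin n)) := by
      have h1 : ∑ i, (if i ∈ t then w i else 0) • β i = ∑ i ∈ t, w i • β i := by
        have he : ∀ i, (if i ∈ t then w i else 0) • β i = if i ∈ t then w i • β i else 0 :=
          fun i => by by_cases h : i ∈ t <;> simp [h]
        rw [Finset.sum_congr rfl fun i _ => he i, Finset.sum_ite_mem, Finset.univ_inter]
      have h2 : ∑ i : Fin N, ε • β i = ε • ∑ i, β i := Finset.smul_sum.symm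
      calc ∑ i, ((if i ∈ t then w i else 0) + ε) • β i
          = ∑ i, ((if i ∈ t then w i else 0) • β i + ε • β i) := by
            exact Finset.sum_congr rfl fun i _ => add_smul _ _ _
        _ = (∑ i ∈ t, w i • β i) + ε • ∑ i, β i := by
            rw [Finset.sum_add_distrib, h1, h2]
        _ = ε • vstar + ε • ∑ i, β i := by rw [hcomb]
        _ = 0 := by rw [hvstar, smul_neg, neg_add_cancel]
    have hvec' : ∑ i, ((if i ∈ t then w i else 0) + ε) • (fun j => (α i j : ℝ)) = (0 : Fin n → ℝ) := by
      have := congrArg WithLp.ofLp hvec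
      simpa [hβ] using this
    have := congrFun hvec' j
    simpa [Finset.sum_apply] using this

lemma span_weights_top (n N : ℕ) (α : Fin N → (Fin n → ℤ))
    (hfaithful : AddSubgroup.closure (Set.range α) = (⊤ : AddSubgroup (Fin n → ℤ))) :
    Submodule.span ℝ (Set.range fun i => (fun j => (α i j : ℝ))) = ⊤ := by
  have key : ∀ x : Fin n → ℤ, (fun j => (x j : ℝ)) ∈
      Submodule.span ℝ (Set.range fun i => (fun j => (α i j : ℝ))) := by
    intro x
    have hx : x ∈ AddSubgroup.closure (Set.range α) := by rw [hfaithful]; trivial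
    refine AddSubgroup.closure_induction ?_ ?_ ?_ ?_ hx
    · rintro y ⟨i, rfl⟩; exact Submodule.subset_span ⟨i, rfl⟩
    · have h0 : (fun j => (((0 : Fin n → ℤ)) j : ℝ)) = (0 : Fin n → ℝ) := by
        funext j; simp
      rw [h0]; exact Submodule.zero_mem _
    · intro a b _ _ ha hb
      have h : (fun j => (((a + b)) j : ℝ))
          = (fun j => ((a j : ℝ))) + fun j => ((b j : ℝ)) := by
        funext j; simp [Pi.add_apply]
      rw [h]; exact Submodule.add_mem _ ha hb
    · intro a _ ha
      have h : (fun j => (((-a)) j : ℝ)) = -fun j => ((a j : ℝ)) := by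
        funext j; simp [Pi.neg_apply]
      rw [h]; exact Submodule.neg_mem _ ha
  rw [eq_top_iff, ← Module.Basis.span_eq (Pi.basisFun ℝ (Fin n))]
  rw [Submodule.span_le]
  rintro _ ⟨j, rfl⟩
  have h : (Pi.basisFun ℝ (Fin n)) j = fun k => (((Pi.single j 1 : Fin n → ℤ)) k : ℝ) := by
    funext k
    by_cases hk : k = j
    · subst hk; simp [Pi.basisFun_apply, Pi.single_apply]
    · simp [Pi.basisFun_apply, Pi.single_apply, hk, Ne.symm hk]
  rw [h]
  exact key _

lemma sqrt_add_le' {a b : ℝ} (ha : 0 ≤ a) (hb : 0 ≤ b) :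
    Real.sqrt (a + b) ≤ Real.sqrt a + Real.sqrt b := by
  rw [Real.sqrt_le_iff]
  constructor
  · positivity
  · nlinarith [Real.sq_sqrt ha, Real.sq_sqrt hb, Real.sqrt_nonneg a, Real.sqrt_nonneg b]

/-- Proposition 4.1 for faithful stable torus modules: the points of the
Kempf–Ness set `Z = ρ⁻¹(0)` where the (real) derivative of `ρ` is surjective
form an open dense subset of `Z`. -/
theorem torus_kempfNess_surjective_deriv_openDense
    (n N : ℕ) (hn : 1 ≤ n) (hN : 1 ≤ N)
    (α : Fin N → (Fin n → ℤ))
    (hfaithful : AddSubgroup.closure (Set.range α) = (⊤ : AddSubgroup (Fin n → ℤ)))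
    (hstable : (0 : EuclideanSpace ℝ (Fin n)) ∈
      intrinsicInterior ℝ (convexHull ℝ
        (Set.range fun i => (WithLp.toLp 2 (fun j => (α i j : ℝ)) : EuclideanSpace ℝ (Fin n))))) :
    IsOpen { z : {z : Fin N → ℂ | torusRealMomentMap n N α z = 0} |
        Function.Surjective (fderiv ℝ (torusRealMomentMap n N α) (z : Fin N → ℂ)) } ∧
    Dense { z : {z : Fin N → ℂ | torusRealMomentMap n N α z = 0} |
        Function.Surjective (fderiv ℝ (torusRealMomentMap n N α) (z : Fin N → ℂ)) } := by
  classical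
  have hfd : ∀ w : Fin N → ℂ,
      fderiv ℝ (torusRealMomentMap n N α) w = knD n N α w :=
    fun w => (hasFDerivAt_rho n N α w).fderiv
  set O : Set (Fin N → ℂ) := {w : Fin N → ℂ |
      Submodule.span ℝ ((fun i => (fun j => (α i j : ℝ))) '' {i | w i ≠ 0}) = ⊤} with hO
  have hSet : { z : {z : Fin N → ℂ | torusRealMomentMap n N α z = 0} |
        Function.Surjective (fderiv ℝ (torusRealMomentMap n N α) (z : Fin N → ℂ)) }
      = Subtype.val ⁻¹' O := by
    ext z
    simp only [Set.mem_setOf_eq, Set.mem_preimage, hO]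
    rw [hfd]
    exact knD_surjective_iff n N α z
  constructor
  · rw [hSet]
    exact (isOpen_span_support_top n N α).preimage continuous_subtype_val
  · rw [Metric.dense_iff]
    intro x r hr
    obtain ⟨c, hcpos, hczero⟩ := exists_pos_combo n N α hstable
    set z : Fin N → ℂ := (x : Fin N → ℂ) with hzdef
    have hz : torusRealMomentMap n N α z = 0 := x.2
    set M : ℝ := ∑ i, c i with hM
    have hM0 : 0 ≤ M := Finset.sum_nonneg fun i _ => (hcpos i).le
    have hciM : ∀ i, c i ≤ M :=
      fun i => Finset.single_le_sum (fun i _ => (hcpos i).le) (Finset.mem_univ i)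
    set δ : ℝ := r ^ 2 / (4 * (M + 1)) with hδdef
    have hδ : 0 < δ := by positivity
    set w : Fin N → ℂ := fun i =>
      if z i = 0 then ((Real.sqrt (δ * c i) : ℝ) : ℂ)
      else (((Real.sqrt (‖z i‖ ^ 2 + δ * c i) / ‖z i‖ : ℝ)) : ℂ) * z i with hw
    have hδc : ∀ i, 0 < δ * c i := fun i => mul_pos hδ (hcpos i)
    have hwnorm : ∀ i, ‖w i‖ ^ 2 = ‖z i‖ ^ 2 + δ * c i := by
      intro i
      by_cases h : z i = 0
      · rw [hw]
        simp only [h, if_true]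
        rw [Complex.norm_real, Real.norm_eq_abs, abs_of_nonneg (Real.sqrt_nonneg _),
          Real.sq_sqrt (hδc i).le]
        simp [h]
      · have ha : 0 < ‖z i‖ := norm_pos_iff.mpr h
        have h1 : (0:ℝ) ≤ ‖z i‖ ^ 2 + δ * c i := add_nonneg (sq_nonneg _) (hδc i).le
        rw [hw]
        simp only [h, if_false]
        rw [norm_mul, Complex.norm_real, Real.norm_eq_abs,
          abs_of_nonneg (by positivity : (0:ℝ) ≤ Real.sqrt (‖z i‖ ^ 2 + δ * c i) / ‖z i‖),
          div_mul_cancel₀ _ ha.ne', Real.sq_sqrt h1]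
    have hwne : ∀ i, w i ≠ 0 := by
      intro i
      by_cases h : z i = 0
      · rw [hw]; simp only [h, if_true]
        exact Complex.ofReal_ne_zero.mpr (ne_of_gt (Real.sqrt_pos.mpr (hδc i)))
      · have ha : 0 < ‖z i‖ := norm_pos_iff.mpr h
        rw [hw]; simp only [h, if_false]
        refine mul_ne_zero (Complex.ofReal_ne_zero.mpr (ne_of_gt ?_)) h
        have h2 : 0 < Real.sqrt (‖z i‖ ^ 2 + δ * c i) :=
          Real.sqrt_pos.mpr (add_pos_of_pos_of_nonneg (pow_pos ha 2) (hδc i).le)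
        positivity
    have hwdist : ∀ i, dist (w i) (z i) ≤ Real.sqrt (δ * c i) := by
      intro i
      rw [dist_eq_norm]
      by_cases h : z i = 0
      · rw [hw]; simp only [h, if_true, sub_zero]
        rw [Complex.norm_real, Real.norm_eq_abs, abs_of_nonneg (Real.sqrt_nonneg _)]
      · have ha : 0 < ‖z i‖ := norm_pos_iff.mpr h
        have h1 : (0:ℝ) ≤ ‖z i‖ ^ 2 + δ * c i := add_nonneg (sq_nonneg _) (hδc i).le
        have hsub : w i - z i
            = (((Real.sqrt (‖z i‖ ^ 2 + δ * c i) / ‖z i‖ - 1 : ℝ)) : ℂ) * z i := by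
          rw [hw]; simp only [h, if_false]
          push_cast
          ring
        have hge : ‖z i‖ ≤ Real.sqrt (‖z i‖ ^ 2 + δ * c i) := by
          rw [← Real.sqrt_sq ha.le]
          exact Real.sqrt_le_sqrt (by rw [Real.sqrt_sq ha.le]; exact le_add_of_nonneg_right (hδc i).le)
        have hs1 : (0:ℝ) ≤ Real.sqrt (‖z i‖ ^ 2 + δ * c i) / ‖z i‖ - 1 := by
          rw [sub_nonneg, le_div_iff₀ ha, one_mul]
          exact hge
        rw [hsub, norm_mul, Complex.norm_real, Real.norm_eq_abs, abs_of_nonneg hs1]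
        have hkey : (Real.sqrt (‖z i‖ ^ 2 + δ * c i) / ‖z i‖ - 1) * ‖z i‖
            = Real.sqrt (‖z i‖ ^ 2 + δ * c i) - ‖z i‖ := by
          rw [sub_mul, one_mul, div_mul_cancel₀ _ ha.ne']
        rw [hkey]
        have := sqrt_add_le' (sq_nonneg ‖z i‖) (hδc i).le
        rw [Real.sqrt_sq ha.le] at this
        linarith
    have hwZ : torusRealMomentMap n N α w = 0 := by
      funext j
      have : torusRealMomentMap n N α w j
          = torusRealMomentMap n N α z j + δ * ∑ i, c i * (α i j : ℝ) := by
        unfold torusRealMomentMap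
        rw [Finset.mul_sum, ← Finset.sum_add_distrib]
        refine Finset.sum_congr rfl fun i _ => ?_
        rw [hwnorm i]
        ring
      rw [this, hczero j, congrFun hz j]
      simp
    have hball : dist w z < r := by
      have hle : dist w z ≤ Real.sqrt (δ * M) := by
        rw [dist_pi_le_iff (Real.sqrt_nonneg _)]
        intro i
        exact (hwdist i).trans (Real.sqrt_le_sqrt
          (mul_le_mul_of_nonneg_left (hciM i) hδ.le))
      have hlt : Real.sqrt (δ * M) < r := by
        have h2 : δ * M ≤ (r / 2) ^ 2 := by
          rw [hδdef]
          rw [div_mul_eq_mul_div, div_le_iff₀ (by positivity : (0:ℝ) < 4 * (M + 1))]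
          nlinarith
        calc Real.sqrt (δ * M) ≤ Real.sqrt ((r / 2) ^ 2) := Real.sqrt_le_sqrt h2
          _ = r / 2 := Real.sqrt_sq (by positivity)
          _ < r := by linarith
      exact lt_of_le_of_lt hle hlt
    refine ⟨⟨w, hwZ⟩, ?_, ?_⟩
    · rw [Metric.mem_ball, Subtype.dist_eq]
      exact hball
    · rw [hSet]
      simp only [Set.mem_preimage, hO, Set.mem_setOf_eq]
      have huniv : {i : Fin N | w i ≠ 0} = Set.univ := Set.eq_univ_of_forall hwne
      rw [huniv, Set.image_univ]
      exact span_weights_top n N α hfaithful
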